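/- Let K be an inductive amalgamation class, let λ be an infinite cardinal, and let U and V be λ-rich models of K with |U| = |V| = λ. Then every morphism f : U → V with |f| < λ can be extended to an isomorphism between U and V. In particular, in each connected component of K there is at most one rich model of a given cardinality, up to isomorphism. -/

import Mathlib

namespace Amalg

open FirstOrder FirstOrder.Language Set Cardinal

universe u

/-- A "model": an `L`-structure whose carrier is a subset of the fixed universe of points `W`. -/
structure Mdl (L : FirstOrder.Language.{u, u}) (W : Type u) where
  s : Set W
  str : L.Structure ↥s

attribute [instance] Mdl.str

variable {L : FirstOrder.Language.{u, u}} {W : Type u}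

/-- The graph of the identity map on a set `s`. -/
def idGraph (s : Set W) : Set (W × W) := {p | p.1 ∈ s ∧ p.1 = p.2}

/-- Composition of (graphs of) partial maps. -/
def relComp (F G : Set (W × W)) : Set (W × W) := {p | ∃ b, (p.1, b) ∈ F ∧ (b, p.2) ∈ G}

/-- The graph of the inverse of a partial map. -/
def swapGraph (G : Set (W × W)) : Set (W × W) := {p | (p.2, p.1) ∈ G}

/-- The graph `G` is a map from (a subset of) `M` to `N`. -/
def inCarriers (M N : Mdl L W) (G : Set (W × W)) : Prop :=
  ∀ p ∈ G, p.1 ∈ M.s ∧ p.2 ∈ N.s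

/-- `G` is (the graph of) a partial embedding from `M` to `N`: it preserves all
quantifier-free formulas in both directions. -/
def IsPartialEmbedding (M N : Mdl L W) (G : Set (W × W)) : Prop :=
  inCarriers M N G ∧
    ∀ (n : ℕ) (φ : L.Formula (Fin n)), φ.IsQF →
      ∀ (x : Fin n → ↥M.s) (y : Fin n → ↥N.s),
        (∀ i, ((x i : W), (y i : W)) ∈ G) → (φ.Realize x ↔ φ.Realize y)

/-- `G` is (the graph of) an elementary map from `M` to `N`: it preserves all
first-order formulas in both directions. -/
def IsElemMap (M N : Mdl L W) (G : Set (W × W)) : Prop :=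
  inCarriers M N G ∧
    ∀ (n : ℕ) (φ : L.Formula (Fin n)) (x : Fin n → ↥M.s) (y : Fin n → ↥N.s),
      (∀ i, ((x i : W), (y i : W)) ∈ G) → (φ.Realize x ↔ φ.Realize y)

/-- A category of infinite `L`-structures and partial embeddings between them, satisfying
axioms K0, K1, K2. -/
structure CatC (L : FirstOrder.Language.{u, u}) (W : Type u) where
  IsMdl : Mdl L W → Prop
  IsMor : Mdl L W → Mdl L W → Set (W × W) → Prop
  infinite : ∀ M, IsMdl M → M.s.Infinite
  mor_src : ∀ M N G, IsMor M N G → IsMdl M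
  mor_tgt : ∀ M N G, IsMor M N G → IsMdl N
  mor_pe : ∀ M N G, IsMor M N G → IsPartialEmbedding M N G
  id_mor : ∀ M, IsMdl M → IsMor M M (idGraph M.s)
  comp_mor : ∀ M N P F G, IsMor M N F → IsMor N P G → IsMor M P (relComp F G)
  k0 : ∀ M N : Mdl L W, IsMdl M → (↥M.s ≅[L] ↥N.s) → IsMdl N
  k1 : ∀ M N G, IsMdl M → IsMdl N → IsElemMap M N G → IsMor M N G
  k2 : ∀ M N G, IsMor M N G → IsMor N M (swapGraph G)

/-- `M` is a strong submodel of `N`: `M ⊆ N` and the identity on `M` is a morphism. -/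
def Le (IsMor : Mdl L W → Mdl L W → Set (W × W) → Prop) (M N : Mdl L W) : Prop :=
  M.s ⊆ N.s ∧ IsMor M N (idGraph M.s)

/-- `G` is a strong embedding of `M` into `N`: a total morphism. -/
def StrongEmb (IsMor : Mdl L W → Mdl L W → Set (W × W) → Prop)
    (M N : Mdl L W) (G : Set (W × W)) : Prop :=
  IsMor M N G ∧ ∀ a ∈ M.s, ∃ b, (a, b) ∈ G

/-- A category as above additionally satisfying axiom R (restrictions of morphisms
are morphisms). -/
structure CatR (L : FirstOrder.Language.{u, u}) (W : Type u) extends CatC L W where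
  restr : ∀ M N F G, IsMor M N G → F ⊆ G → IsMor M N F

/-- An inductive amalgamation class: axioms K0, K1, K2, R, Ap and In. -/
structure IAC (L : FirstOrder.Language.{u, u}) (W : Type u) extends CatR L W where
  ap : ∀ M N F, IsMor M N F →
    ∃ (N' : Mdl L W) (H : Set (W × W)), Le IsMor N N' ∧ F ⊆ H ∧ StrongEmb IsMor M N' H
  ind : ∀ (ι : Type u) [LinearOrder ι] [Nonempty ι] (Ms : ι → Mdl L W),
    (∀ i j, i ≤ j → Le IsMor (Ms i) (Ms j)) →
    ∃ Mu : Mdl L W, Mu.s = ⋃ i, (Ms i).s ∧ IsMdl Mu ∧ ∀ i, Le IsMor (Ms i) Mu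

/-- `U` is a `κ`-rich model: every morphism `f : M → U` with `|f| < |M| ≤ κ` extends
to a strong embedding of `M` into `U`. -/
def RichAt (IsMdl : Mdl L W → Prop) (IsMor : Mdl L W → Mdl L W → Set (W × W) → Prop)
    (κ : Cardinal.{u}) (U : Mdl L W) : Prop :=
  IsMdl U ∧ ∀ (M : Mdl L W) (G : Set (W × W)), IsMor M U G → #↥G < #↥M.s → #↥M.s ≤ κ →
    ∃ H, G ⊆ H ∧ StrongEmb IsMor M U H

/-- `U` is rich: `|U|`-rich. -/
def Rich (IsMdl : Mdl L W → Prop) (IsMor : Mdl L W → Mdl L W → Set (W × W) → Prop)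
    (U : Mdl L W) : Prop :=
  RichAt IsMdl IsMor (#↥U.s) U

/-- The class is connected: between any two models there is a morphism. -/
def Connected (IsMdl : Mdl L W → Prop)
    (IsMor : Mdl L W → Mdl L W → Set (W × W) → Prop) : Prop :=
  ∀ M N, IsMdl M → IsMdl N → ∃ G, IsMor M N G

/-- The theory of the rich models: the sentences true in every rich model. -/
def Trich (IsMdl : Mdl L W → Prop)
    (IsMor : Mdl L W → Mdl L W → Set (W × W) → Prop) : L.Theory :=
  {φ | ∀ U : Mdl L W, Rich IsMdl IsMor U → Sentence.Realize (↥U.s) φ}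

/-- The class is full: if every sentence true in a model `M` is true in some rich model,
then some rich model satisfies the whole theory of `M`. -/
def Full (IsMdl : Mdl L W → Prop)
    (IsMor : Mdl L W → Mdl L W → Set (W × W) → Prop) : Prop :=
  ∀ M, IsMdl M →
    (∀ φ : L.Sentence, Sentence.Realize (↥M.s) φ → ∃ U, Rich IsMdl IsMor U ∧ Sentence.Realize (↥U.s) φ) →
    ∃ U, Rich IsMdl IsMor U ∧ ∀ φ : L.Sentence, Sentence.Realize (↥M.s) φ → Sentence.Realize (↥U.s) φ

/-- `M` is a substructure of `N`: `M ⊆ N` and the inclusion is a partial embedding. -/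
def Substr (M N : Mdl L W) : Prop :=
  M.s ⊆ N.s ∧ IsPartialEmbedding M N (idGraph M.s)

/-- `M` is an elementary substructure of `N`. -/
def ElemSubstr (M N : Mdl L W) : Prop :=
  M.s ⊆ N.s ∧ IsElemMap M N (idGraph M.s)

/-- Realization of a formula in an explicitly given structure. -/
def RealizeIn (L : FirstOrder.Language.{u, u}) (N : Type u) (SN : L.Structure N) {α : Type u}
    (φ : L.Formula α) (v : α → N) : Prop :=
  letI := SN
  φ.Realize v

/-- `M` is `κ`-saturated: every type (in finitely many variables) over a parameter set
`A ⊆ M` with `|A| < κ` which is consistent with the theory of `M` with parameters from `A`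
is realized in `M`. -/
def IsSatAt (L : FirstOrder.Language.{u, u}) (κ : Cardinal.{u}) (M : Type u) [L.Structure M] : Prop :=
  ∀ (A : Set M), #↥A < κ →
    ∀ (n : ℕ) (p : Set (L.Formula (Fin n ⊕ ↥A))),
      (∃ (N : Type u) (SN : L.Structure N) (v : ↥A → N) (w : Fin n → N),
        (∀ ψ : L.Formula ↥A, ψ.Realize ((↑) : ↥A → M) ↔ RealizeIn L N SN ψ v) ∧
        ∀ φ ∈ p, RealizeIn L N SN φ (Sum.elim w v)) →
      ∃ a : Fin n → M, ∀ φ ∈ p, φ.Realize (Sum.elim a ((↑) : ↥A → M))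

/-- `M` is saturated: `|M|`-saturated. -/
def IsSat (L : FirstOrder.Language.{u, u}) (M : Type u) [L.Structure M] : Prop :=
  IsSatAt L (#M) M

/-- A theory is model-complete: whenever `M ⊆ N` are models of `T`,
`M` is an elementary substructure of `N`. -/
def IsModelComplete (W : Type u) (T : L.Theory) : Prop :=
  ∀ M N : Mdl L W, Theory.Model (↥M.s) T → Theory.Model (↥N.s) T → Substr M N → ElemSubstr M N


/-! ### Auxiliary lemmas for Statement 6 -/

section Aux6

private lemma isQF_toFormula {α : Type*} {k : ℕ} {φ : L.BoundedFormula α k} (h : φ.IsQF) :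
    φ.toFormula.IsQF := by
  induction h with
  | falsum => exact BoundedFormula.IsQF.falsum
  | of_isAtomic h =>
    cases h with
    | equal t₁ t₂ =>
      exact (BoundedFormula.IsAtomic.equal _ _).isQF
    | rel R ts =>
      exact (BoundedFormula.IsAtomic.rel _ _).isQF
  | imp _ _ ih₁ ih₂ => exact ih₁.imp ih₂

private lemma pe_realize_qf {U V : Mdl L W} {G : Set (W × W)}
    (hpe : IsPartialEmbedding U V G) {n k : ℕ} {φ : L.BoundedFormula (Fin n) k}
    (hq : φ.IsQF) (v : Fin n → ↥U.s) (xs : Fin k → ↥U.s) (w : Fin n → ↥V.s)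
    (ys : Fin k → ↥V.s) (h1 : ∀ i, ((v i : W), (w i : W)) ∈ G)
    (h2 : ∀ i, ((xs i : W), (ys i : W)) ∈ G) :
    φ.Realize v xs ↔ φ.Realize w ys := by
  classical
  set ψ : L.Formula (Fin (n + k)) := φ.toFormula.relabel finSumFinEquiv with hψdef
  have hψ : ψ.IsQF :=
    BoundedFormula.IsQF.relabel (φ := φ.toFormula) (isQF_toFormula (φ := φ) hq)
      (Sum.inl ∘ finSumFinEquiv)
  have key : ∀ (M : Mdl L W) (v' : Fin n → ↥M.s) (xs' : Fin k → ↥M.s),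
      ψ.Realize (fun i => Sum.elim v' xs' (finSumFinEquiv.symm i)) ↔ φ.Realize v' xs' := by
    intro M v' xs'
    rw [hψdef, Formula.realize_relabel, BoundedFormula.realize_toFormula]
    have h1' : ((fun i => Sum.elim v' xs' (finSumFinEquiv.symm i)) ∘ ⇑finSumFinEquiv)
        = Sum.elim v' xs' := by
      funext j; simp [Function.comp]
    rw [h1', Sum.elim_comp_inl, Sum.elim_comp_inr]
  rw [← key U v xs, ← key V w ys]
  refine hpe.2 (n + k) ψ hψ _ _ ?_
  intro i
  rcases h : finSumFinEquiv.symm i with j | j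
  · simpa [h] using h1 j
  · simpa [h] using h2 j

variable (K : IAC L W) (lam : Cardinal.{u}) (U V : Mdl L W)

/-- `G` is a "small" morphism from `U` to `V`. -/
private def Good (G : Set (W × W)) : Prop :=
  K.IsMor U V G ∧ #↥G < lam

variable {K lam U V}

private lemma swap_swap (G : Set (W × W)) : swapGraph (swapGraph G) = G := rfl

private lemma mk_swapGraph (G : Set (W × W)) : #↥(swapGraph G) = #↥G :=
  Cardinal.mk_congr
    ⟨fun p => ⟨(p.1.2, p.1.1), p.2⟩, fun p => ⟨(p.1.2, p.1.1), p.2⟩,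
      fun p => rfl, fun p => rfl⟩

private lemma mk_insert_lt (hlam : ℵ₀ ≤ lam) {G : Set (W × W)} (h : #↥G < lam)
    (p : W × W) : #↥(insert p G) < lam :=
  lt_of_le_of_lt (Cardinal.mk_insert_le)
    (Cardinal.add_lt_of_lt hlam h (one_lt_aleph0.trans_le hlam))

private lemma good_forth (hlam : ℵ₀ ≤ lam) (hV : RichAt K.IsMdl K.IsMor lam V)
    (hcU : #↥U.s = lam) {G : Set (W × W)} (hG : Good K lam U V G)
    {a : W} (ha : a ∈ U.s) :
    ∃ b ∈ V.s, Good K lam U V (insert (a, b) G) := by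
  obtain ⟨H, hGH, hH, htot⟩ := hV.2 U G hG.1 (by rw [hcU]; exact hG.2) (le_of_eq hcU)
  obtain ⟨b, hb⟩ := htot a ha
  have hbV : b ∈ V.s := ((K.mor_pe U V H hH).1 (a, b) hb).2
  refine ⟨b, hbV, K.restr U V _ H hH (insert_subset hb hGH), mk_insert_lt hlam hG.2 _⟩

private lemma good_back (hlam : ℵ₀ ≤ lam) (hU : RichAt K.IsMdl K.IsMor lam U)
    (hcV : #↥V.s = lam) {G : Set (W × W)} (hG : Good K lam U V G)
    {b : W} (hb : b ∈ V.s) :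
    ∃ a ∈ U.s, Good K lam U V (insert (a, b) G) := by
  have hswap : K.IsMor V U (swapGraph G) := K.k2 U V G hG.1
  have hcard : #↥(swapGraph G) < lam := by rw [mk_swapGraph]; exact hG.2
  obtain ⟨H, hGH, hH, htot⟩ := hU.2 V (swapGraph G) hswap (by rw [hcV]; exact hcard)
    (le_of_eq hcV)
  obtain ⟨a, hba⟩ := htot b hb
  have haU : a ∈ U.s := ((K.mor_pe V U H hH).1 (b, a) hba).2
  have hsub : insert (a, b) G ⊆ swapGraph H := by
    refine insert_subset hba ?_
    intro p hp
    exact hGH hp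
  refine ⟨a, haU, K.restr U V _ (swapGraph H) (K.k2 V U H hH) hsub,
    mk_insert_lt hlam hG.2 _⟩

private lemma good_elem (hlam : ℵ₀ ≤ lam) (hU : RichAt K.IsMdl K.IsMor lam U)
    (hV : RichAt K.IsMdl K.IsMor lam V) (hcU : #↥U.s = lam) (hcV : #↥V.s = lam) :
    ∀ {n k : ℕ} (φ : L.BoundedFormula (Fin n) k) (G : Set (W × W)),
      Good K lam U V G →
      ∀ (v : Fin n → ↥U.s) (xs : Fin k → ↥U.s) (w : Fin n → ↥V.s) (ys : Fin k → ↥V.s),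
        (∀ i, ((v i : W), (w i : W)) ∈ G) → (∀ i, ((xs i : W), (ys i : W)) ∈ G) →
        (φ.Realize v xs ↔ φ.Realize w ys) := by
  intro n k φ
  induction φ with
  | falsum => exact fun G hG v xs w ys h1 h2 => Iff.rfl
  | equal t₁ t₂ =>
    exact fun G hG v xs w ys h1 h2 =>
      pe_realize_qf (K.mor_pe U V G hG.1) ((BoundedFormula.IsAtomic.equal _ _).isQF)
        v xs w ys h1 h2
  | rel R ts =>
    exact fun G hG v xs w ys h1 h2 =>
      pe_realize_qf (K.mor_pe U V G hG.1) ((BoundedFormula.IsAtomic.rel _ _).isQF)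
        v xs w ys h1 h2
  | imp φ₁ φ₂ ih₁ ih₂ =>
    intro G hG v xs w ys h1 h2
    simp only [BoundedFormula.realize_imp]
    exact imp_congr (ih₁ G hG v xs w ys h1 h2) (ih₂ G hG v xs w ys h1 h2)
  | all φ ih =>
    intro G hG v xs w ys h1 h2
    simp only [BoundedFormula.realize_all]
    constructor
    · intro h b
      obtain ⟨a, haU, hGood⟩ := good_back hlam hU hcV hG b.2
      have key := ih (insert (a, (b : W)) G) hGood v (Fin.snoc xs ⟨a, haU⟩) w
        (Fin.snoc ys b) (fun i => mem_insert_of_mem _ (h1 i)) ?_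
      · exact key.1 (h ⟨a, haU⟩)
      · intro i
        refine Fin.lastCases ?_ ?_ i
        · simp
        · intro j
          simp only [Fin.snoc_castSucc]
          exact mem_insert_of_mem _ (h2 j)
    · intro h a
      obtain ⟨b, hbV, hGood⟩ := good_forth hlam hV hcU hG a.2
      have key := ih (insert ((a : W), b) G) hGood v (Fin.snoc xs a) w
        (Fin.snoc ys ⟨b, hbV⟩) (fun i => mem_insert_of_mem _ (h1 i)) ?_
      · exact key.2 (h ⟨b, hbV⟩)
      · intro i
        refine Fin.lastCases ?_ ?_ i
        · simp
        · intro j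
          simp only [Fin.snoc_castSucc]
          exact mem_insert_of_mem _ (h2 j)

private lemma good_isElemMap (hlam : ℵ₀ ≤ lam) (hU : RichAt K.IsMdl K.IsMor lam U)
    (hV : RichAt K.IsMdl K.IsMor lam V) (hcU : #↥U.s = lam) (hcV : #↥V.s = lam)
    {G : Set (W × W)} (hG : Good K lam U V G) : IsElemMap U V G := by
  refine ⟨(K.mor_pe U V G hG.1).1, ?_⟩
  intro n φ x y h
  exact good_elem hlam hU hV hcU hcV φ G hG x (fun i => i.elim0) y (fun i => i.elim0) h
    (fun i => i.elim0)

private lemma good_two (hlam : ℵ₀ ≤ lam) (hU : RichAt K.IsMdl K.IsMor lam U)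
    (hV : RichAt K.IsMdl K.IsMor lam V) (hcU : #↥U.s = lam) (hcV : #↥V.s = lam)
    {A : Set (W × W)} (hA : Good K lam U V A) (a : ↥U.s) (b : ↥V.s) :
    ∃ A', A ⊆ A' ∧ Good K lam U V A' ∧ (∃ c, ((a : W), c) ∈ A') ∧
      (∃ c, (c, (b : W)) ∈ A') ∧ #↥A' ≤ #↥A + 2 := by
  obtain ⟨c, hcV', hG1⟩ := good_forth hlam hV hcU hA a.2
  obtain ⟨d, hdU, hG2⟩ := good_back hlam hU hcV hG1 b.2
  refine ⟨insert (d, (b : W)) (insert ((a : W), c) A),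
    (subset_insert _ _).trans (subset_insert _ _), hG2,
    ⟨c, mem_insert_of_mem _ (mem_insert _ _)⟩, ⟨d, mem_insert _ _⟩, ?_⟩
  calc #↥(insert (d, (b : W)) (insert ((a : W), c) A))
      ≤ #↥(insert ((a : W), c) A) + 1 := Cardinal.mk_insert_le
    _ ≤ (#↥A + 1) + 1 := add_le_add_left Cardinal.mk_insert_le 1
    _ = #↥A + 2 := by rw [add_assoc, one_add_one_eq_two]

end Aux6

/-- Uniqueness, second part: if `U`, `V` are `λ`-rich of cardinality `λ`,
every morphism `f : U → V` with `|f| < λ` extends to an isomorphism; in particular any two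
rich models of the same cardinality in the same connected component are isomorphic. -/
theorem statement_6 (K : IAC L W) (lam : Cardinal.{u}) (hlam : ℵ₀ ≤ lam)
    (U V : Mdl L W) (hU : RichAt K.IsMdl K.IsMor lam U)
    (hV : RichAt K.IsMdl K.IsMor lam V)
    (hcU : #↥U.s = lam) (hcV : #↥V.s = lam) :
    (∀ G : Set (W × W), K.IsMor U V G → #↥G < lam →
      ∃ H, G ⊆ H ∧ IsPartialEmbedding U V H ∧
        (∀ a ∈ U.s, ∃ b, (a, b) ∈ H) ∧ (∀ b ∈ V.s, ∃ a, (a, b) ∈ H)) ∧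
    ((∃ G, K.IsMor U V G) →
      ∃ H, IsPartialEmbedding U V H ∧
        (∀ a ∈ U.s, ∃ b, (a, b) ∈ H) ∧ (∀ b ∈ V.s, ∃ a, (a, b) ∈ H)) := by
  classical
  have main : ∀ G : Set (W × W), K.IsMor U V G → #↥G < lam →
      ∃ H, G ⊆ H ∧ IsPartialEmbedding U V H ∧
        (∀ a ∈ U.s, ∃ b, (a, b) ∈ H) ∧ (∀ b ∈ V.s, ∃ a, (a, b) ∈ H) := by
    intro G hGmor hGcard
    have hGood : Good K lam U V G := ⟨hGmor, hGcard⟩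
    have hmkT : #(lam.ord.ToType) = lam := mk_ord_toType lam
    have hne : Nonempty lam.ord.ToType :=
      mk_ne_zero_iff.1 (by rw [hmkT]; exact (aleph0_pos.trans_le hlam).ne')
    haveI := hne
    obtain ⟨eU⟩ : Nonempty (lam.ord.ToType ≃ ↥U.s) := Cardinal.eq.1 (hmkT.trans hcU.symm)
    obtain ⟨eV⟩ : Nonempty (lam.ord.ToType ≃ ↥V.s) := Cardinal.eq.1 (hmkT.trans hcV.symm)
    let F : lam.ord.ToType → Set (W × W) :=
      (wellFounded_lt).fix fun i rec =>
        if h : Good K lam U V (G ∪ ⋃ j : Iio i, rec j.1 j.2) then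
          Classical.choose (good_two hlam hU hV hcU hcV h (eU i) (eV i))
        else (∅ : Set (W × W))
    have hFeq : ∀ i, F i =
        if h : Good K lam U V (G ∪ ⋃ j : Iio i, F j.1) then
          Classical.choose (good_two hlam hU hV hcU hcV h (eU i) (eV i))
        else (∅ : Set (W × W)) := fun i => WellFounded.fix_eq _ _ i
    have hstep : ∀ i (h : Good K lam U V (G ∪ ⋃ j : Iio i, F j.1)),
        (G ∪ ⋃ j : Iio i, F j.1) ⊆ F i ∧ Good K lam U V (F i) ∧
        (∃ c, ((eU i : W), c) ∈ F i) ∧ (∃ c, (c, (eV i : W)) ∈ F i) ∧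
        #↥(F i) ≤ #↥(G ∪ ⋃ j : Iio i, F j.1) + 2 := by
      intro i h
      obtain ⟨s1, s2, s3, s4, s5⟩ :=
        Classical.choose_spec (good_two hlam hU hV hcU hcV h (eU i) (eV i))
      rw [hFeq i, dif_pos h]
      exact ⟨s1, s2, s3, s4, s5⟩
    have hP : ∀ i, Good K lam U V (F i) ∧ G ⊆ F i ∧ (∀ j, j < i → F j ⊆ F i) ∧
        #↥(F i) ≤ #↥G + #↥(Iic i) + ℵ₀ ∧
        (∃ c, ((eU i : W), c) ∈ F i) ∧ (∃ c, (c, (eV i : W)) ∈ F i) := by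
      refine WellFounded.fix (wellFounded_lt) ?_
      intro i IH
      have hIio : #↥(Iio i) < lam := mk_Iio_toType_ord_lt i
      have hIic : #↥(Iic i) < lam := by
        have h1 : #↥(Iic i) ≤ #↥(Iio i) + 1 := by
          rw [← Iio_insert]; exact Cardinal.mk_insert_le
        exact h1.trans_lt
          (Cardinal.add_lt_of_lt hlam hIio (one_lt_aleph0.trans_le hlam))
      have hAmor : K.IsMor U V (G ∪ ⋃ j : Iio i, F j.1) := by
        refine K.k1 U V _ hU.1 hV.1 ⟨?_, ?_⟩
        · rintro p (hp | hp)
          · exact (K.mor_pe U V G hGmor).1 p hp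
          · simp only [mem_iUnion] at hp
            obtain ⟨j, hj⟩ := hp
            exact (K.mor_pe U V _ (IH j.1 j.2).1.1).1 p hj
        · intro n φ x y hxy
          by_cases hall : ∀ m : Fin n, ((x m : W), (y m : W)) ∈ G
          · exact (good_isElemMap hlam hU hV hcU hcV hGood).2 n φ x y hall
          · push_neg at hall
            obtain ⟨m₀, hm₀⟩ := hall
            have hj₀ : ∃ j : ↥(Iio i), ((x m₀ : W), (y m₀ : W)) ∈ F j.1 := by
              rcases hxy m₀ with h | h
              · exact absurd h hm₀
              · simpa only [mem_iUnion] using h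
            obtain ⟨j₀, hj₀⟩ := hj₀
            haveI : Nonempty ↥(Iio i) := ⟨j₀⟩
            have hch : ∀ m : Fin n, ∃ j : ↥(Iio i), ((x m : W), (y m : W)) ∈ F j.1 := by
              intro m
              rcases hxy m with h | h
              · exact ⟨j₀, (IH j₀.1 j₀.2).2.1 h⟩
              · simpa only [mem_iUnion] using h
            choose jf hjf using hch
            obtain ⟨jm, hjm⟩ := Finite.exists_le jf
            have hmem : ∀ m, ((x m : W), (y m : W)) ∈ F jm.1 := by
              intro m
              rcases eq_or_lt_of_le (hjm m) with heq | hlt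
              · rw [← heq]; exact hjf m
              · exact (IH jm.1 jm.2).2.2.1 (jf m).1 (Subtype.coe_lt_coe.2 hlt) (hjf m)
            exact (good_isElemMap hlam hU hV hcU hcV (IH jm.1 jm.2).1).2 n φ x y hmem
      have hFle : ∀ j : ↥(Iio i), #↥(F j.1) ≤ #↥G + #↥(Iio i) + ℵ₀ := by
        intro j
        refine ((IH j.1 j.2).2.2.2.1).trans ?_
        exact add_le_add_left (add_le_add_right
          (Cardinal.mk_le_mk_of_subset (fun x hx => mem_Iio.2 (lt_of_le_of_lt (mem_Iic.1 hx) j.2))) _) _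
      have hAle : #↥(G ∪ ⋃ j : Iio i, F j.1) ≤
          #↥G + #↥(Iio i) * (#↥G + #↥(Iio i) + ℵ₀) := by
        refine (Cardinal.mk_union_le _ _).trans (add_le_add_right ?_ _)
        calc #↥(⋃ j : ↥(Iio i), F j.1)
            ≤ Cardinal.sum (fun j : ↥(Iio i) => #↥(F j.1)) := Cardinal.mk_iUnion_le_sum_mk
          _ ≤ Cardinal.sum (fun _ : ↥(Iio i) => #↥G + #↥(Iio i) + ℵ₀) :=
              Cardinal.sum_le_sum _ _ hFle
          _ = #↥(Iio i) * (#↥G + #↥(Iio i) + ℵ₀) := Cardinal.sum_const' _ _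
      have hcinf : ℵ₀ ≤ #↥G + #↥(Iio i) + ℵ₀ := le_add_self
      have hcinf' : ℵ₀ ≤ #↥G + #↥(Iic i) + ℵ₀ := le_add_self
      have hA2 : #↥(G ∪ ⋃ j : Iio i, F j.1) ≤ #↥G + #↥(Iic i) + ℵ₀ := by
        have h1 : #↥(Iio i) * (#↥G + #↥(Iio i) + ℵ₀) ≤ #↥G + #↥(Iio i) + ℵ₀ := by
          conv_rhs => rw [← Cardinal.mul_eq_self hcinf]
          exact mul_le_mul_left ((le_add_self : #↥(Iio i) ≤ #↥G + #↥(Iio i)).trans (self_le_add_right _ _)) _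
        have h2 : #↥G ≤ #↥G + #↥(Iio i) + ℵ₀ := (self_le_add_right _ _).trans
          (self_le_add_right _ _)
        have h3 : #↥(G ∪ ⋃ j : Iio i, F j.1) ≤
            (#↥G + #↥(Iio i) + ℵ₀) + (#↥G + #↥(Iio i) + ℵ₀) :=
          hAle.trans (add_le_add h2 h1)
        refine (h3.trans_eq (Cardinal.add_eq_self hcinf)).trans ?_
        exact add_le_add_left (add_le_add_right
          (Cardinal.mk_le_mk_of_subset Iio_subset_Iic_self) _) _
      have hAlt : #↥(G ∪ ⋃ j : Iio i, F j.1) < lam := by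
        rcases lt_or_eq_of_le hlam with hgt | heq
        · exact hA2.trans_lt
            (Cardinal.add_lt_of_lt hlam (Cardinal.add_lt_of_lt hlam hGcard hIic) hgt)
        · have hGfin : G.Finite := lt_aleph0_iff_set_finite.1 (by rw [heq]; exact hGcard)
          have hIiofin : (Iio i).Finite := lt_aleph0_iff_set_finite.1 (by rw [heq]; exact hIio)
          haveI : Finite ↥(Iio i) := hIiofin.to_subtype
          have hAfin : (G ∪ ⋃ j : Iio i, F j.1).Finite :=
            hGfin.union (Set.finite_iUnion fun j =>
              lt_aleph0_iff_set_finite.1 (by rw [heq]; exact (IH j.1 j.2).1.2))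
          exact hAfin.lt_aleph0.trans_le hlam
      obtain ⟨hsub, hGoodF, hptU, hptV, hcardF⟩ := hstep i ⟨hAmor, hAlt⟩
      refine ⟨hGoodF, subset_union_left.trans hsub, ?_, ?_, hptU, hptV⟩
      · intro j hj
        exact (subset_iUnion (fun j' : ↥(Iio i) => F j'.1) ⟨j, hj⟩).trans
          (subset_union_right.trans hsub)
      · have h2le : (2 : Cardinal) ≤ #↥G + #↥(Iic i) + ℵ₀ :=
          ((nat_lt_aleph0 2).le.trans hcinf').trans_eq' (by norm_num)
        calc #↥(F i) ≤ (#↥G + #↥(Iic i) + ℵ₀) + 2 := hcardF.trans (add_le_add_left hA2 2)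
          _ ≤ (#↥G + #↥(Iic i) + ℵ₀) + (#↥G + #↥(Iic i) + ℵ₀) := add_le_add_right h2le _
          _ = #↥G + #↥(Iic i) + ℵ₀ := Cardinal.add_eq_self hcinf'
    have hmono : ∀ {j i₂ : lam.ord.ToType}, j ≤ i₂ → F j ⊆ F i₂ := by
      intro j i₂ h
      rcases eq_or_lt_of_le h with rfl | h
      · exact Subset.rfl
      · exact (hP i₂).2.2.1 j h
    refine ⟨⋃ i, F i, ?_, ⟨?_, ?_⟩, ?_, ?_⟩
    · obtain ⟨i0⟩ := hne
      exact ((hP i0).2.1).trans (subset_iUnion F i0)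
    · intro p hp
      simp only [mem_iUnion] at hp
      obtain ⟨i, hpi⟩ := hp
      exact (K.mor_pe U V (F i) (hP i).1.1).1 p hpi
    · intro n φ _ x y hxy
      have hch : ∀ m : Fin n, ∃ i, ((x m : W), (y m : W)) ∈ F i := by
        intro m
        simpa only [mem_iUnion] using hxy m
      choose g hg using hch
      obtain ⟨im, him⟩ := Finite.exists_le g
      exact (good_isElemMap hlam hU hV hcU hcV (hP im).1).2 n φ x y
        (fun m => hmono (him m) (hg m))
    · intro a ha
      obtain ⟨c, hc⟩ := (hP (eU.symm ⟨a, ha⟩)).2.2.2.2.1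
      rw [Equiv.apply_symm_apply] at hc
      exact ⟨c, mem_iUnion.2 ⟨_, hc⟩⟩
    · intro b hb
      obtain ⟨c, hc⟩ := (hP (eV.symm ⟨b, hb⟩)).2.2.2.2.2
      rw [Equiv.apply_symm_apply] at hc
      exact ⟨c, mem_iUnion.2 ⟨_, hc⟩⟩
  refine ⟨main, ?_⟩
  rintro ⟨G, hG⟩
  obtain ⟨H, _, h1, h2, h3⟩ := main ∅ (K.restr U V ∅ G hG (empty_subset G))
    (by simpa using aleph0_pos.trans_le hlam)
  exact ⟨H, h1, h2, h3⟩

end Amalg
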